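/- Let Y be a set, X ⊆ Y a subset, R a set of pairs of nonempty words over X, and Q a set of pairs of nonempty words over Y; write R♯ and Q♯ for the semigroup congruences on the free semigroups X⁺ and Y⁺ generated by R and Q respectively. Suppose: (1) X ⊆ Y (so X⁺ embeds in Y⁺); (2) each pair of R, viewed as a pair of words over Y, lies in Q♯; (3) every letter y ∈ Y is Q♯-equivalent to some word over X; (4) there is a semigroup homomorphism φ : Y⁺ → X⁺/R♯ such that every pair of Q lies in the kernel of φ and xφ = [x]_R for every x ∈ X. Then the quotient semigroups X⁺/R♯ and Y⁺/Q♯ are isomorphic. -/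

import Mathlib

/-- Let `Y` be a set, `X ⊆ Y`, `R` a set of pairs of nonempty words over
`X` and `Q` a set of pairs of nonempty words over `Y`, generating semigroup congruences
`R♯` on `X⁺ = FreeSemigroup X` and `Q♯` on `Y⁺ = FreeSemigroup Y`.  Suppose:
(1) `X ⊆ Y` (words over `X` are mapped into `Y⁺` by `FreeSemigroup.map Subtype.val`);
(2) every pair of `R`, viewed in `Y⁺`, lies in `Q♯`;
(3) every letter `y ∈ Y` is `Q♯`-equivalent to a word over `X`;
(4) there is a homomorphism `φ : Y⁺ → X⁺/R♯` with `Q` contained in its kernel and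
`xφ = [x]_R` for `x ∈ X`.
Then `X⁺/R♯ ≅ Y⁺/Q♯`. -/
theorem stmt8 {Y : Type*} (X : Set Y)
    (R : FreeSemigroup X → FreeSemigroup X → Prop)
    (Q : FreeSemigroup Y → FreeSemigroup Y → Prop)
    (hRQ : ∀ u v : FreeSemigroup X, R u v →
      conGen Q (FreeSemigroup.map (Subtype.val) u) (FreeSemigroup.map (Subtype.val) v))
    (hgen : ∀ y : Y, ∃ w : FreeSemigroup X,
      conGen Q (FreeSemigroup.of y) (FreeSemigroup.map (Subtype.val) w))
    (φ : FreeSemigroup Y →ₙ* (conGen R).Quotient)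
    (hφQ : ∀ u v : FreeSemigroup Y, Q u v → φ u = φ v)
    (hφX : ∀ x : X, φ (FreeSemigroup.of (x : Y)) = ↑(FreeSemigroup.of x)) :
    Nonempty ((conGen R).Quotient ≃* (conGen Q).Quotient) := by
  classical
  -- ψ0 : X⁺ → Y⁺/Q♯
  let ψ0 : FreeSemigroup X → (conGen Q).Quotient :=
    fun w => ↑(FreeSemigroup.map (Subtype.val : X → Y) w)
  have hψ0mul : ∀ u v, ψ0 (u * v) = ψ0 u * ψ0 v := by
    intro u v
    show (↑(FreeSemigroup.map (Subtype.val : X → Y) (u * v)) : (conGen Q).Quotient) = _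
    rw [map_mul]
    rfl
  have hψresp : ∀ u v, conGen R u v → ψ0 u = ψ0 v := by
    have h : conGen R ≤ Con.ker (MulHom.mk ψ0 hψ0mul) :=
      Con.conGen_le.2 (fun u v huv => (Con.eq (conGen Q)).2 (hRQ u v huv))
    exact h
  have hφresp : ∀ u v, conGen Q u v → φ u = φ v := by
    have h : conGen Q ≤ Con.ker φ :=
      Con.conGen_le.2 (fun u v huv => hφQ u v huv)
    exact h
  let ψ : (conGen R).Quotient → (conGen Q).Quotient := fun a => Con.liftOn a ψ0 hψresp
  let χ : (conGen Q).Quotient → (conGen R).Quotient := fun b => Con.liftOn b φ hφresp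
  -- φ ∘ map agrees with the canonical projection
  have hcomp' : ∀ w : FreeSemigroup X,
      φ (FreeSemigroup.map (Subtype.val : X → Y) w) = (↑w : (conGen R).Quotient) := by
    have h : φ.comp (FreeSemigroup.map (Subtype.val : X → Y))
        = ({ toFun := fun w => (↑w : (conGen R).Quotient),
             map_mul' := fun _ _ => rfl } : FreeSemigroup X →ₙ* (conGen R).Quotient) := by
      apply FreeSemigroup.hom_ext
      funext x
      exact hφX x
    intro w
    exact DFunLike.congr_fun h w
  have hleft : ∀ a : (conGen R).Quotient, χ (ψ a) = a := by
    intro a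
    induction a using Con.induction_on with
    | H w => exact hcomp' w
  have hmul : ∀ a b : (conGen R).Quotient, ψ (a * b) = ψ a * ψ b := by
    intro a b
    induction a using Con.induction_on with
    | H x =>
      induction b using Con.induction_on with
      | H y => exact hψ0mul x y
  have hright : ∀ b : (conGen Q).Quotient, ψ (χ b) = b := by
    intro b
    induction b using Con.induction_on with
    | H w =>
      show ψ (φ w) = ↑w
      induction w using FreeSemigroup.recOnMul with
      | ih1 y =>
        obtain ⟨u, hu⟩ := hgen y
        have h1 : φ (FreeSemigroup.of y) = φ (FreeSemigroup.map (Subtype.val : X → Y) u) :=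
          hφresp _ _ hu
        rw [h1, hcomp' u]
        exact ((Con.eq (conGen Q)).2 hu).symm
      | ih2 u v hu hv =>
        rw [map_mul φ, hmul, hu, hv]
        rfl
  exact ⟨{ toFun := ψ, invFun := χ, left_inv := hleft, right_inv := hright,
           map_mul' := hmul }⟩
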